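/- arXiv:1807.06152 — 2 statements merged into one kernel-verified Lean document; each statement's English description precedes it below -/
import Mathlib

section
/- Let x₀** ∈ (ℓ∞)* be a norm-one Hahn–Banach extension of the limit functional on c. Then G* x₀** = −e*, where e* = (1,1,1,…) ∈ ℓ∞, and consequently ⟨G* x₀**, x₀**⟩ = −1. -/
noncomputable section
open scoped ENNReal
open Filter

abbrev ell1 := lp (fun _ : ℕ => ℝ) 1
abbrev ellInfty := lp (fun _ : ℕ => ℝ) ∞

/-- The Gossez operator, coordinatewise: (Gx)_m = Σ_{n>m} x_n − Σ_{n<m} x_n. -/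
def Gfun (x : ℕ → ℝ) (m : ℕ) : ℝ :=
  (∑' n, if m < n then x n else 0) - ∑ n ∈ Finset.range m, x n

/-- The all-ones sequence e* ∈ ℓ∞. -/
def eStar : ellInfty :=
  ⟨fun _ => (1 : ℝ), memℓp_infty ⟨1, by rintro r ⟨i, rfl⟩; simp⟩⟩

/-- The m-th standard unit vector e*_m ∈ ℓ∞. -/
def eVec (m : ℕ) : ellInfty := lp.single ∞ m (1 : ℝ)

lemma ell1_summable (x : ell1) : Summable (fun n => x n) := by
  have h := (lp.memℓp x).summable (p := 1) (by norm_num)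
  simp only [ENNReal.toReal_one, Real.rpow_one] at h
  exact h.of_norm

theorem gossez_adjoint_at_limit_functional
    (G : ell1 →L[ℝ] ellInfty) (hG : ∀ (x : ell1) (m : ℕ), G x m = Gfun x m)
    (x0 : StrongDual ℝ ellInfty) (hnorm : ‖x0‖ = 1)
    (hlim : ∀ (xs : ellInfty) (L : ℝ),
      Tendsto (fun m => xs m) atTop (nhds L) → x0 xs = L) :
    (∀ x : ell1, x0 (G x) = ∑' m, x m * (-eStar m)) ∧ x0 (-eStar) = -1 := by
  constructor
  · intro x
    have hsum : Summable (fun n => x n) := ell1_summable x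
    set S : ℝ := ∑' n, x n with hS
    -- tail formula
    have htail : ∀ m, (∑' n, if m < n then x n else 0) = S - ∑ n ∈ Finset.range (m + 1), x n := by
      intro m
      have h1 : (fun n => if m < n then x n else 0) =
          fun n => x n - (if n ∈ Finset.range (m + 1) then x n else 0) := by
        funext n
        by_cases h : m < n
        · simp [h, Finset.mem_range, Nat.lt_succ_iff, not_le.mpr h]
        · simp [h, Finset.mem_range, Nat.lt_succ_iff, not_lt.mp h]
      have h2 : Summable (fun n => if n ∈ Finset.range (m + 1) then x n else 0) :=
        summable_of_ne_finset_zero (s := Finset.range (m + 1)) (fun n hn => by simp [hn])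
      have h3 : (∑' n, if n ∈ Finset.range (m + 1) then x n else 0)
          = ∑ n ∈ Finset.range (m + 1), x n := by
        rw [tsum_eq_sum (s := Finset.range (m + 1)) (fun n hn => by simp [hn])]
        exact Finset.sum_congr rfl (fun n hn => by simp [hn])
      rw [h1, Summable.tsum_sub hsum h2, h3]
    have hGm : ∀ m, G x m = S - ∑ n ∈ Finset.range (m + 1), x n - ∑ n ∈ Finset.range m, x n := by
      intro m; rw [hG, Gfun, htail]
    have hpart : Tendsto (fun m => ∑ n ∈ Finset.range m, x n) atTop (nhds S) :=
      hsum.hasSum.tendsto_sum_nat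
    have hpart' : Tendsto (fun m => ∑ n ∈ Finset.range (m + 1), x n) atTop (nhds S) :=
      hpart.comp (tendsto_add_atTop_nat 1)
    have hT : Tendsto (fun m => G x m) atTop (nhds (-S)) := by
      have : Tendsto (fun m => S - ∑ n ∈ Finset.range (m + 1), x n - ∑ n ∈ Finset.range m, x n)
          atTop (nhds (S - S - S)) := ((tendsto_const_nhds.sub hpart').sub hpart)
      simp only [sub_self, zero_sub] at this
      exact this.congr (fun m => (hGm m).symm)
    have := hlim (G x) (-S) hT
    rw [this]
    have heq : ∀ m, x m * (-eStar m) = -(x m) := by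
      intro m
      have : eStar m = 1 := rfl
      simp [this]
    rw [tsum_congr heq, tsum_neg]
  · apply hlim
    have : ∀ m : ℕ, (-eStar) m = -1 := by
      intro m
      have : (-eStar) m = -(eStar m) := rfl
      simp [this]; rfl
    simp only [this]
    exact tendsto_const_nhds
end
end

section
/- For every x** ∈ (ℓ∞)* = (ℓ¹)**, the adjoint of the Gossez operator satisfies G* x** = −G(W x**) − w***(x**) · e* in ℓ∞. -/
noncomputable section
open scoped ENNReal
open Filter

-- coordinate evaluation as CLM
def evalCLM (m : ℕ) : ellInfty →L[ℝ] ℝ :=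
  LinearMap.mkContinuous
    { toFun := fun f => f m, map_add' := fun f g => rfl, map_smul' := fun c f => rfl }
    1 (fun f => by
      rw [one_mul]
      exact lp.norm_apply_le_norm (ENNReal.top_ne_zero) f m)

@[simp] lemma evalCLM_apply (m : ℕ) (f : ellInfty) : evalCLM m f = f m := rfl

@[simp] lemma eVec_apply (m j : ℕ) : (eVec m : ℕ → ℝ) j = if j = m then 1 else 0 := by
  simp [eVec, lp.single_apply, Pi.single_apply]

@[simp] lemma eStar_apply (j : ℕ) : (eStar : ℕ → ℝ) j = 1 := rfl

-- split tsum
lemma tsum_split {f : ℕ → ℝ} (hf : Summable f) (m : ℕ) :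
    ∑' n, f n = (∑ k ∈ Finset.range (m+1), f k) + ∑' n, (if m < n then f n else 0) := by
  have hfin : (Function.support fun n => if m < n then 0 else f n) ⊆ ↑(Finset.range (m+1)) := by
    intro n hn
    simp only [Finset.coe_range, Set.mem_Iio]
    by_contra h
    push_neg at h
    exact Function.mem_support.mp hn (by simp [show m < n from h])
  have hsum2 : Summable (fun n => if m < n then (0:ℝ) else f n) :=
    summable_of_finite_support ((Set.Finite.subset (Finset.finite_toSet _) hfin))
  have hsum1 : Summable (fun n => if m < n then f n else 0) := by
    have : (fun n => if m < n then f n else 0) = f - (fun n => if m < n then 0 else f n) := by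
      funext n; by_cases h : m < n <;> simp [h]
    rw [this]; exact hf.sub hsum2
  have h1 : ∑' n, f n = (∑' n, (if m < n then (0:ℝ) else f n)) + ∑' n, (if m < n then f n else 0) := by
    rw [← Summable.tsum_add hsum2 hsum1]
    congr 1; funext n; by_cases h : m < n <;> simp [h]
  rw [h1]
  congr 1
  rw [tsum_eq_sum (f := fun n => if m < n then (0:ℝ) else f n)
    (s := Finset.range (m+1)) (by
      intro n hn; simp only [Finset.mem_range] at hn
      have : m < n := by omega
      simp [this])]
  refine Finset.sum_congr rfl fun n hn => ?_
  simp only [Finset.mem_range] at hn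
  have : ¬ m < n := by omega
  simp [this]

lemma summable_tail {f : ℕ → ℝ} (hf : Summable f) (m : ℕ) :
    Summable (fun n => if m < n then f n else 0) := by
  have : (fun n => if m < n then f n else 0) = fun n => f n - (if m < n then 0 else f n) := by
    funext n; by_cases h : m < n <;> simp [h]
  rw [this]
  refine hf.sub (summable_of_finite_support ?_)
  refine Set.Finite.subset (Finset.finite_toSet (Finset.range (m+1))) ?_
  intro n hn
  simp only [Finset.coe_range, Set.mem_Iio]
  by_contra h
  push_neg at h
  exact Function.mem_support.mp hn (by simp [show m < n from h])

def vVec (n : ℕ) : ellInfty :=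
  (-1 : ℝ) • eVec n + (2:ℝ) • ((∑ k ∈ Finset.range (n+1), eVec k) - eStar)

lemma vVec_apply (n m : ℕ) :
    (vVec n : ℕ → ℝ) m = if m < n then 0 else if m = n then -1 else -2 := by
  have hsum : (↑(∑ k ∈ Finset.range (n+1), eVec k) : ℕ → ℝ) m
      = if m ∈ Finset.range (n+1) then (1:ℝ) else 0 := by
    rw [lp.coeFn_sum, Finset.sum_apply]
    simp_rw [eVec_apply]
    rw [Finset.sum_ite_eq (Finset.range (n+1)) m (fun _ => (1:ℝ))]
  have : (vVec n : ℕ → ℝ) m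
      = (-1:ℝ) * (if m = n then (1:ℝ) else 0)
        + 2 * ((if m ∈ Finset.range (n+1) then (1:ℝ) else 0) - 1) := by
    simp only [vVec, lp.coeFn_add, lp.coeFn_smul, Pi.add_apply, Pi.smul_apply, smul_eq_mul,
      lp.coeFn_sub, Pi.sub_apply, hsum, eVec_apply, eStar_apply]
  rw [this]
  rcases lt_trichotomy m n with h | h | h
  · have h2 : m < n + 1 := by omega
    simp [h, Finset.mem_range, Nat.ne_of_lt h, h2]
  · simp [h, Finset.mem_range]
  · have h1 : ¬ m < n := by omega
    have h2 : m ≠ n := by omega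
    have h3 : ¬ m ∈ Finset.range (n+1) := by simp [Finset.mem_range]; omega
    simp [h1, h2, h3]

lemma vVec_norm_le (n : ℕ) : ‖vVec n‖ ≤ 2 := by
  refine lp.norm_le_of_forall_le (by norm_num) fun m => ?_
  rw [Real.norm_eq_abs, vVec_apply]
  rcases lt_trichotomy m n with h | h | h
  · simp [h]
  · simp [h]
  · have h1 : ¬ m < n := by omega
    have h2 : m ≠ n := by omega
    simp [h1, h2]

lemma summable_coeffs (xss : StrongDual ℝ ellInfty) :
    Summable (fun n => xss (eVec n)) := by
  set c : ℕ → ℝ := fun n => xss (eVec n) with hc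
  have habs : Summable (fun n => |c n|) := by
    apply summable_of_sum_le (c := ‖xss‖) (fun n => abs_nonneg _)
    intro F
    set ε : ℕ → ℝ := fun n => if 0 ≤ c n then (1:ℝ) else -1 with hε
    have hval : ∀ n, |c n| = ε n * c n := by
      intro n
      by_cases h : 0 ≤ c n
      · simp [hε, h, abs_of_nonneg h]
      · push_neg at h
        simp [hε, not_le.mpr h, abs_of_neg h]
    set g : ellInfty := ∑ n ∈ F, ε n • eVec n with hg
    have hgapp : ∀ j, (g : ℕ → ℝ) j = if j ∈ F then ε j else 0 := by
      intro j
      rw [hg, lp.coeFn_sum, Finset.sum_apply]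
      have : ∀ n ∈ F, (↑(ε n • eVec n) : ℕ → ℝ) j = if j = n then ε n else 0 := by
        intro n _
        rw [lp.coeFn_smul, Pi.smul_apply, eVec_apply, smul_eq_mul]
        by_cases h : j = n <;> simp [h]
      rw [Finset.sum_congr rfl this, Finset.sum_ite_eq F j ε]
    have hgnorm : ‖g‖ ≤ 1 := by
      refine lp.norm_le_of_forall_le zero_le_one fun j => ?_
      rw [Real.norm_eq_abs, hgapp]
      by_cases h : j ∈ F
      · by_cases h2 : 0 ≤ c j <;> simp [h, hε, h2]
      · simp [h]
    have hxg : xss g = ∑ n ∈ F, ε n * c n := by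
      rw [hg, map_sum]
      refine Finset.sum_congr rfl fun n _ => ?_
      rw [map_smul]; rfl
    calc ∑ n ∈ F, |c n| = xss g := by rw [hxg]; exact Finset.sum_congr rfl fun n _ => hval n
      _ ≤ |xss g| := le_abs_self _
      _ ≤ ‖xss‖ * ‖g‖ := xss.le_opNorm g
      _ ≤ ‖xss‖ * 1 := by
          exact mul_le_mul_of_nonneg_left hgnorm (norm_nonneg _)
      _ = ‖xss‖ := mul_one _
  exact habs.of_abs

set_option maxHeartbeats 1000000 in
theorem gossez_adjoint_formula
    (G : ell1 →L[ℝ] ellInfty) (hG : ∀ (x : ell1) (m : ℕ), G x m = Gfun x m)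
    (xss : StrongDual ℝ ellInfty) :
    ∀ x : ell1, xss (G x) =
      ∑' m, x m *
        (-(Gfun (fun n => xss (eVec n)) m) - (xss eStar - ∑' n, xss (eVec n))) := by
  intro x
  set c : ℕ → ℝ := fun n => xss (eVec n) with hc
  set s : ℝ := xss eStar with hs
  have hcsum : Summable c := summable_coeffs xss
  have hx : Summable (fun n => x n) := by
    have h1 := (lp.memℓp x).summable (p := 1) (by norm_num)
    simp only [ENNReal.toReal_one, Real.rpow_one] at h1
    exact h1.of_norm
  -- summability of the vVec series
  have hv : Summable (fun n => x n • vVec n) := by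
    refine Summable.of_norm_bounded (hx.abs.mul_right 2) fun n => ?_
    rw [norm_smul, Real.norm_eq_abs]
    exact mul_le_mul_of_nonneg_left (vVec_norm_le n) (abs_nonneg _)
  -- decomposition of G x
  have hGx : G x = (∑' n, x n) • eStar + ∑' n, x n • vVec n := by
    apply lp.ext
    funext m
    have hlhs : (G x : ℕ → ℝ) m = Gfun x m := hG x m
    have hcoord : (↑(∑' n, x n • vVec n) : ℕ → ℝ) m
        = ∑' n, x n * ((vVec n : ℕ → ℝ) m) := by
      have := (evalCLM m).map_tsum hv
      simp only [evalCLM_apply] at this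
      rw [this]
      refine tsum_congr fun n => ?_
      rw [lp.coeFn_smul, Pi.smul_apply, smul_eq_mul]
    have htail : ∑' n, x n * ((vVec n : ℕ → ℝ) m)
        = -(x m) - 2 * ∑ k ∈ Finset.range m, x k := by
      rw [tsum_eq_sum (s := Finset.range (m+1)) (by
        intro n hn
        simp only [Finset.mem_range] at hn
        have h1 : m < n := by omega
        rw [vVec_apply]
        simp [h1])]
      rw [Finset.sum_range_succ]
      have h1 : ∀ k ∈ Finset.range m, x k * ((vVec k : ℕ → ℝ) m) = -2 * x k := by
        intro k hk
        simp only [Finset.mem_range] at hk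
        rw [vVec_apply]
        have h3 : ¬ m < k := by omega
        have h2 : m ≠ k := by omega
        simp [h3, h2]; ring
      rw [Finset.sum_congr rfl h1, vVec_apply]
      have h4 : ∑ k ∈ Finset.range m, (-2:ℝ) * x k
          = -2 * ∑ k ∈ Finset.range m, x k := by rw [Finset.mul_sum]
      simp only [lt_irrefl, if_false, h4, eq_self_iff_true, if_true]
      ring
    rw [hlhs, lp.coeFn_add, Pi.add_apply, lp.coeFn_smul, Pi.smul_apply, smul_eq_mul,
      eStar_apply, hcoord, htail]
    have hsplit := tsum_split hx m
    rw [Finset.sum_range_succ] at hsplit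
    unfold Gfun
    linarith [hsplit]
  have hxv : Summable (fun n => x n * xss (vVec n)) := by
    refine Summable.of_norm_bounded (hx.abs.mul_right (‖xss‖ * 2)) fun n => ?_
    rw [Real.norm_eq_abs, abs_mul]
    refine mul_le_mul_of_nonneg_left ?_ (abs_nonneg _)
    calc |xss (vVec n)| ≤ ‖xss‖ * ‖vVec n‖ := xss.le_opNorm _
      _ ≤ ‖xss‖ * 2 := mul_le_mul_of_nonneg_left (vVec_norm_le n) (norm_nonneg _)
  have h1 : xss (G x) = (∑' n, x n) * s + ∑' n, x n * xss (vVec n) := by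
    rw [hGx, map_add, map_smul, smul_eq_mul, ContinuousLinearMap.map_tsum xss hv]
    congr 1
    refine tsum_congr fun n => ?_
    rw [map_smul]; rfl
  rw [h1, ← tsum_mul_right, ← Summable.tsum_add (hx.mul_right s) hxv]
  refine tsum_congr fun m => ?_
  have heq : ∀ k, xss (eVec k) = c k := fun k => rfl
  have hxv2 : xss (vVec m) = -(c m) + 2 * ((∑ k ∈ Finset.range (m+1), c k) - s) := by
    unfold vVec
    rw [map_add, map_smul, map_smul, map_sub, map_sum]
    simp only [smul_eq_mul, heq, ← hs]
    ring
  have hsplit := tsum_split hcsum m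
  have hG2 : Gfun c m = (∑' n, c n) - (∑ k ∈ Finset.range (m+1), c k)
      - ∑ k ∈ Finset.range m, c k := by
    unfold Gfun
    linarith [hsplit]
  rw [hxv2, hG2, Finset.sum_range_succ]
  ring
end
end
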